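/- With δ_{-i} = φ_{-i}(h)x^{-i} as above, for all i, j ≥ m one has δ_{-i}δ_{-j} = δ_{-i-j} in the skew Laurent ring K[h][x, x^{-1}; σ], σ(h) = h-1. -/

import Mathlib

open Polynomial LaurentPolynomial

/-- The operator `f(h)x^a` of the skew Laurent ring `K[h][x,x⁻¹;σ]`, `σ(h) = h-1`,
acting on `K[x,x⁻¹]` by `(f(h)x^a) ∗ x^j = f(a+j+1) x^{a+j}`
(so that `h ∗ x^j = (j+1) x^j` and `x^{±1} ∗ x^j = x^{j±1}`). -/
noncomputable def op (K : Type*) [Field K] (f : Polynomial K) (a : ℤ) :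
    LaurentPolynomial K →ₗ[K] LaurentPolynomial K :=
  (Finsupp.lsum K fun j : ℤ =>
    f.eval ((a + j + 1 : ℤ) : K) •
      LinearMap.toSpanSingleton K (LaurentPolynomial K) (LaurentPolynomial.T (a + j))) ∘ₗ
    (AddMonoidAlgebra.coeffLinearEquiv K : LaurentPolynomial K ≃ₗ[K] (ℤ →₀ K)).toLinearMap

/-- `A(m) = K + Σ_{i ≥ m} K x^i`, as a subspace of `K[x,x⁻¹]`. -/
noncomputable def Am (K : Type*) [Field K] (m : ℕ) : Submodule K (LaurentPolynomial K) :=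
  Submodule.span K {p : LaurentPolynomial K | ∃ i : ℤ, (i = 0 ∨ (m : ℤ) ≤ i) ∧ p = T i}

/-- `φ_{-i} = (h+i-1)·∏_{j=m-i+1, j≠1}^{m} (h-j)` (for `i ≥ m`). -/
noncomputable def phi (K : Type*) [Field K] (m i : ℕ) : Polynomial K :=
  (X + Polynomial.C ((i : K) - 1)) *
    ∏ j ∈ (Finset.Icc ((m : ℤ) - i + 1) (m : ℤ)).filter (· ≠ 1),
      (X - Polynomial.C ((j : ℤ) : K))

/-- The key polynomial identity: `φ₋ᵢ(h)·φ₋ⱼ(h+i) = φ₋ᵢ₋ⱼ(h)` for `i, j ≥ m ≥ 2`. -/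
lemma phi_key (K : Type*) [Field K] [CharZero K] (m i j : ℕ) (hm : 2 ≤ m)
    (hi : m ≤ i) (hj : m ≤ j) :
    phi K m i * (phi K m j).comp (X + Polynomial.C (i : K)) = phi K m (i + j) := by
  have hmi : (m : ℤ) ≤ i := by exact_mod_cast hi
  have hmj : (m : ℤ) ≤ j := by exact_mod_cast hj
  have hm2 : (2 : ℤ) ≤ m := by exact_mod_cast hm
  -- shifted product reindex
  have hcomp : (phi K m j).comp (X + Polynomial.C (i : K)) =
      (X + Polynomial.C ((i : K) + j - 1)) *
        ∏ t ∈ (Finset.Icc ((m : ℤ) - i - j + 1) ((m : ℤ) - i)).filter (· ≠ 1 - (i:ℤ)),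
          (X - Polynomial.C ((t : ℤ) : K)) := by
    rw [phi, mul_comp, add_comp, X_comp, C_comp, prod_comp]
    rw [Finset.prod_bij (fun t _ => t - (i : ℤ))]
    · simp only [C_add, C_sub, C_1]; ring
    · intro t ht
      simp only [Finset.mem_filter, Finset.mem_Icc] at ht ⊢
      omega
    · intro a ha b hb hab; omega
    · intro b hb
      refine ⟨b + i, ?_, by ring⟩
      simp only [Finset.mem_filter, Finset.mem_Icc] at hb ⊢
      omega
    · intro t ht
      simp only [sub_comp, X_comp, C_comp]
      push_cast
      simp only [C_add, C_sub, C_1]; ring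
  rw [hcomp, phi, phi]
  -- incorporate the factor (X + C (i-1)) = X - C(1-i) into the shifted product
  have h1i : (1 - (i:ℤ)) ∈ Finset.Icc ((m : ℤ) - i - j + 1) ((m : ℤ) - i) := by
    simp only [Finset.mem_Icc]; omega
  have hfull : (X + Polynomial.C ((i : K) - 1)) *
      ∏ t ∈ (Finset.Icc ((m : ℤ) - i - j + 1) ((m : ℤ) - i)).filter (· ≠ 1 - (i:ℤ)),
        (X - Polynomial.C ((t : ℤ) : K)) =
      ∏ t ∈ Finset.Icc ((m : ℤ) - i - j + 1) ((m : ℤ) - i), (X - Polynomial.C ((t : ℤ) : K)) := by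
    rw [Finset.filter_ne', ← Finset.mul_prod_erase _ _ h1i]
    push_cast
    simp only [C_add, C_sub, C_1]; ring
  -- split the big interval
  have hsplit : (Finset.Icc ((m : ℤ) - (i + j : ℕ) + 1) (m : ℤ)).filter (· ≠ 1) =
      Finset.Icc ((m : ℤ) - i - j + 1) ((m : ℤ) - i) ∪
        (Finset.Icc ((m : ℤ) - i + 1) (m : ℤ)).filter (· ≠ 1) := by
    ext t
    simp only [Finset.mem_filter, Finset.mem_union, Finset.mem_Icc]
    push_cast
    omega
  have hdisj : Disjoint (Finset.Icc ((m : ℤ) - i - j + 1) ((m : ℤ) - i))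
      ((Finset.Icc ((m : ℤ) - i + 1) (m : ℤ)).filter (· ≠ 1)) := by
    rw [Finset.disjoint_left]
    intro t ht ht'
    simp only [Finset.mem_filter, Finset.mem_Icc] at ht ht'
    omega
  rw [hsplit, Finset.prod_union hdisj, ← hfull]
  push_cast
  ring

/-- Action of `op` on a monomial. -/
lemma op_single (K : Type*) [Field K] (f : Polynomial K) (a k : ℤ) (c : K) :
    op K f a (AddMonoidAlgebra.single k c) =
      AddMonoidAlgebra.single (a + k) (f.eval ((a + k + 1 : ℤ) : K) * c) := by
  rw [op, LinearMap.comp_apply]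
  erw [show ((AddMonoidAlgebra.coeffLinearEquiv K : LaurentPolynomial K ≃ₗ[K] (ℤ →₀ K)) :
      LaurentPolynomial K →ₗ[K] (ℤ →₀ K)) (AddMonoidAlgebra.single k c) = Finsupp.single k c from rfl,
    Finsupp.lsum_single]
  rw [LinearMap.smul_apply, LinearMap.toSpanSingleton_apply]
  rw [T, smul_comm, AddMonoidAlgebra.smul_single, AddMonoidAlgebra.smul_single]
  rw [smul_eq_mul, smul_eq_mul, mul_one, mul_comm]

/-- Extensionality for linear endomorphisms of `K[x,x⁻¹]`. -/
lemma lp_ext {K : Type*} [Field K] {φ ψ : LaurentPolynomial K →ₗ[K] LaurentPolynomial K}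
    (h : ∀ (k : ℤ) (c : K), φ (AddMonoidAlgebra.single k c) = ψ (AddMonoidAlgebra.single k c)) : φ = ψ :=
  AddMonoidAlgebra.lhom_ext' fun k => LinearMap.ext fun c => h k c

/-- `δ₋ᵢ δ₋ⱼ = δ₋ᵢ₋ⱼ` for all `i, j ≥ m`, where `δ₋ᵢ = φ₋ᵢ(h)x^{-i}`.
Equality in the skew Laurent ring `K[h][x,x⁻¹;σ]` (`σ(h) = h-1`) is expressed via
its faithful representation `f(h)x^a ↦ op K f a` on `K[x,x⁻¹]`. -/
theorem stmt5 (K : Type*) [Field K] [CharZero K] (m : ℕ) (hm : 2 ≤ m)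
    (i j : ℕ) (hi : m ≤ i) (hj : m ≤ j) :
    op K (phi K m i) (-(i : ℤ)) ∘ₗ op K (phi K m j) (-(j : ℤ)) =
      op K (phi K m (i + j)) (-((i : ℤ) + (j : ℤ))) := by
  have hkey := phi_key K m i j hm hi hj
  apply lp_ext
  intro k c
  rw [LinearMap.comp_apply, op_single, op_single, op_single]
  congr 1
  · ring
  · rw [← mul_assoc]
    congr 1
    have hx : ((-(i:ℤ) + (-(j:ℤ) + k) + 1 : ℤ) : K) = ((-((i:ℤ) + (j:ℤ)) + k + 1 : ℤ) : K) := by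
      push_cast; ring
    have hy : ((-(j:ℤ) + k + 1 : ℤ) : K) = ((-((i:ℤ) + (j:ℤ)) + k + 1 : ℤ) : K) + (i : K) := by
      push_cast; ring
    rw [← hkey, eval_mul, eval_comp, eval_add, eval_X, eval_C, hx, hy, mul_comm]
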